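/- Let a ≥ 0, ε > 0, and n an integer with |n| ≥ n̄ = 1 + ⌊2/ε⌋, so ω_n is real and positive. Then H_n attains its maximum absolute value at the unique critical time, and |H_n(t)| ≤ (2/ε)·(1/n²) for all t ≥ 0. -/

import Mathlib

/-- `h_n = (a + ε n²)/2`. -/
noncomputable def hcoef (a ε : ℝ) (n : ℤ) : ℝ := (a + ε * (n : ℝ) ^ 2) / 2

/-- The real-valued fundamental oscillator solution `H_n(t)`:
`e^{-h t} sinh(ω t)/ω` when `ω² = h² - n² > 0`,
`e^{-h t} sin(|ω| t)/|ω|` when `h² - n² < 0`, and `t e^{-h t}` when `h² = n²`. -/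
noncomputable def Hfun (a ε : ℝ) (n : ℤ) (t : ℝ) : ℝ :=
  if 0 < (hcoef a ε n) ^ 2 - (n : ℝ) ^ 2 then
    Real.exp (-(hcoef a ε n) * t) *
      Real.sinh (Real.sqrt ((hcoef a ε n) ^ 2 - (n : ℝ) ^ 2) * t) /
      Real.sqrt ((hcoef a ε n) ^ 2 - (n : ℝ) ^ 2)
  else if (hcoef a ε n) ^ 2 - (n : ℝ) ^ 2 < 0 then
    Real.exp (-(hcoef a ε n) * t) *
      Real.sin (Real.sqrt ((n : ℝ) ^ 2 - (hcoef a ε n) ^ 2) * t) /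
      Real.sqrt ((n : ℝ) ^ 2 - (hcoef a ε n) ^ 2)
  else Real.exp (-(hcoef a ε n) * t) * t

/-- `n̄ = 1 + ⌊2/ε⌋`. -/
noncomputable def nbar (ε : ℝ) : ℤ := 1 + ⌊(2 : ℝ) / ε⌋

/-- key comparison: `sinh(wt)/w ≤ sinh(ht)/h` in cross-multiplied form. -/
lemma sinh_ratio_aux {w h : ℝ} (hw : 0 ≤ w) (hwh : w ≤ h) {t : ℝ} (ht : 0 ≤ t) :
    Real.sinh (w * t) * h ≤ Real.sinh (h * t) * w := by
  have hder : ∀ x : ℝ, HasDerivAt (fun x => Real.sinh (h*x) * w - Real.sinh (w*x) * h)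
      (Real.cosh (h*x) * h * w - Real.cosh (w*x) * w * h) x := by
    intro x
    have d1 : HasDerivAt (fun x => Real.sinh (h*x)) (Real.cosh (h*x) * h) x := by
      simpa [Function.comp_def] using (Real.hasDerivAt_sinh (h*x)).comp x ((hasDerivAt_id x).const_mul h)
    have d2 : HasDerivAt (fun x => Real.sinh (w*x)) (Real.cosh (w*x) * w) x := by
      simpa [Function.comp_def] using (Real.hasDerivAt_sinh (w*x)).comp x ((hasDerivAt_id x).const_mul w)
    exact (d1.mul_const w).sub (d2.mul_const h)
  have hmono : MonotoneOn (fun x => Real.sinh (h*x) * w - Real.sinh (w*x) * h) (Set.Ici 0) := by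
    apply monotoneOn_of_deriv_nonneg (convex_Ici 0)
    · exact (Continuous.sub ((Real.continuous_sinh.comp (continuous_const.mul continuous_id)).mul
        continuous_const) ((Real.continuous_sinh.comp (continuous_const.mul continuous_id)).mul
        continuous_const)).continuousOn
    · intro x _
      exact (hder x).differentiableAt.differentiableWithinAt
    · intro x hx
      rw [interior_Ici, Set.mem_Ioi] at hx
      rw [(hder x).deriv]
      have hc : Real.cosh (w*x) ≤ Real.cosh (h*x) := by
        rw [Real.cosh_le_cosh, abs_of_nonneg (mul_nonneg hw hx.le),
          abs_of_nonneg (mul_nonneg (le_trans hw hwh) hx.le)]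
        nlinarith
      nlinarith [Real.cosh_pos (w*x),
        mul_nonneg (mul_nonneg hw (le_trans hw hwh)) (sub_nonneg.mpr hc)]
  have h0 : (0:ℝ) ∈ Set.Ici (0:ℝ) := Set.mem_Ici.mpr le_rfl
  have ht' : t ∈ Set.Ici (0:ℝ) := ht
  have := hmono h0 ht' ht
  simp only [mul_zero, Real.sinh_zero, zero_mul, sub_zero, zero_sub] at this
  linarith

set_option maxHeartbeats 1000000 in
theorem stmt10 (a ε : ℝ) (ha : 0 ≤ a) (hε : 0 < ε) (n : ℤ) (hn : nbar ε ≤ |n|) :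
    (∃ tn : ℝ, 0 ≤ tn ∧ deriv (Hfun a ε n) tn = 0 ∧
      ∀ t : ℝ, 0 ≤ t → |Hfun a ε n t| ≤ |Hfun a ε n tn|) ∧
    ∀ t : ℝ, 0 ≤ t → |Hfun a ε n t| ≤ (2 / ε) * (1 / (n : ℝ) ^ 2) := by
  have hfloor : (2:ℝ)/ε < ((nbar ε : ℤ) : ℝ) := by
    have := Int.lt_floor_add_one ((2:ℝ)/ε)
    simp only [nbar]; push_cast; linarith
  have hnR : ((nbar ε : ℤ) : ℝ) ≤ |(n:ℝ)| := by
    have : ((nbar ε : ℤ) : ℝ) ≤ ((|n| : ℤ) : ℝ) := by exact_mod_cast hn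
    simpa using this
  have h2ε : 2/ε < |(n:ℝ)| := lt_of_lt_of_le hfloor hnR
  have hn1 : (1:ℝ) ≤ |(n:ℝ)| := by
    have h0 : (0:ℤ) ≤ ⌊(2:ℝ)/ε⌋ := Int.floor_nonneg.mpr (by positivity)
    have h1 : (1:ℝ) ≤ ((nbar ε : ℤ) : ℝ) := by
      simp only [nbar]; push_cast
      have : (0:ℝ) ≤ (⌊(2:ℝ)/ε⌋ : ℝ) := by exact_mod_cast h0
      linarith
    linarith
  have hεn : 2 * |(n:ℝ)| < ε * (n:ℝ)^2 := by
    have hsq : (n:ℝ)^2 = |(n:ℝ)| * |(n:ℝ)| := by rw [← sq_abs]; ring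
    have h2 : 2 < |(n:ℝ)| * ε := (div_lt_iff₀ hε).mp h2ε
    nlinarith
  set h := hcoef a ε n with hhdef
  have hh_ge : ε * (n:ℝ)^2 / 2 ≤ h := by simp only [hhdef, hcoef]; linarith
  have hhn : |(n:ℝ)| < h := by nlinarith
  have hD : 0 < h^2 - (n:ℝ)^2 := by nlinarith [sq_abs (n:ℝ), abs_nonneg (n:ℝ)]
  set w := Real.sqrt (h^2 - (n:ℝ)^2) with hwdef
  have hw0 : 0 < w := Real.sqrt_pos.mpr hD
  have hw2 : w^2 = h^2 - (n:ℝ)^2 := Real.sq_sqrt hD.le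
  have hnn0 : (0:ℝ) < (n:ℝ)^2 := by nlinarith
  have hwh : w < h := by nlinarith
  have hh0 : 0 < h := lt_of_le_of_lt (abs_nonneg _) hhn
  set H : ℝ → ℝ := fun t => Real.exp (-h * t) * Real.sinh (w * t) / w with hHdef
  have hfun_eq : Hfun a ε n = H := by
    funext t; simp only [Hfun, ← hhdef, ← hwdef, if_pos hD, hHdef]
  rw [hfun_eq]
  have Hnonneg : ∀ t : ℝ, 0 ≤ t → 0 ≤ H t := by
    intro t ht
    have h1 : 0 ≤ Real.sinh (w * t) := Real.sinh_nonneg_iff.mpr (by positivity)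
    have h2 : 0 < Real.exp (-h*t) := Real.exp_pos _
    exact div_nonneg (by nlinarith) hw0.le
  have Hbound : ∀ t : ℝ, 0 ≤ t → H t ≤ 1 / (2*h) := by
    intro t ht
    have key := sinh_ratio_aux hw0.le hwh.le ht
    have hsinh_le : Real.sinh (h*t) ≤ Real.exp (h*t) / 2 := by
      rw [Real.sinh_eq]
      have : 0 < Real.exp (-(h*t)) := Real.exp_pos _
      linarith
    show Real.exp (-h * t) * Real.sinh (w * t) / w ≤ 1/(2*h)
    rw [div_le_div_iff₀ hw0 (by positivity)]
    have hx : 0 < Real.exp (-h*t) := Real.exp_pos _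
    have e1 : Real.exp (-h*t) * Real.sinh (w*t) * (2*h)
        ≤ Real.exp (-h*t) * Real.sinh (h*t) * (2*w) := by nlinarith
    have e2 : Real.exp (-h*t) * Real.sinh (h*t) * (2*w) ≤ 1 * w := by
      have hc : Real.exp (-h*t) * Real.sinh (h*t) ≤ 1/2 := by
        have hxe : Real.exp (-h*t) * (Real.exp (h*t)/2) = 1/2 := by
          rw [mul_div_assoc', ← Real.exp_add]; norm_num
        calc Real.exp (-h*t) * Real.sinh (h*t)
            ≤ Real.exp (-h*t) * (Real.exp (h*t)/2) :=
              mul_le_mul_of_nonneg_left hsinh_le hx.le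
          _ = 1/2 := hxe
      nlinarith
    linarith
  have part2 : ∀ t : ℝ, 0 ≤ t → |H t| ≤ (2/ε) * (1/(n:ℝ)^2) := by
    intro t ht
    rw [abs_of_nonneg (Hnonneg t ht)]
    have hkey : 1/(2*h) ≤ (2/ε) * (1/(n:ℝ)^2) := by
      have heq : (2/ε) * (1/(n:ℝ)^2) = 2/(ε * (n:ℝ)^2) := by
        field_simp
      rw [heq, div_le_div_iff₀ (by positivity) (by positivity)]
      nlinarith
    linarith [Hbound t ht]
  refine ⟨?_, part2⟩
  -- tail bound
  have Htail : ∀ t : ℝ, 0 ≤ t → H t ≤ Real.exp (-(h-w)*t) / (2*w) := by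
    intro t ht
    have hsinh_le : Real.sinh (w*t) ≤ Real.exp (w*t) / 2 := by
      rw [Real.sinh_eq]
      have : 0 < Real.exp (-(w*t)) := Real.exp_pos _
      linarith
    show Real.exp (-h * t) * Real.sinh (w * t) / w ≤ Real.exp (-(h-w)*t) / (2*w)
    rw [div_le_div_iff₀ hw0 (by positivity)]
    have hx : 0 < Real.exp (-h*t) := Real.exp_pos _
    have hid : Real.exp (-h*t) * (Real.exp (w*t)/2) * (2*w) = Real.exp (-(h-w)*t) * w := by
      rw [mul_div_assoc', ← Real.exp_add]
      ring_nf
    calc Real.exp (-h*t) * Real.sinh (w*t) * (2*w)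
        ≤ Real.exp (-h*t) * (Real.exp (w*t)/2) * (2*w) :=
          mul_le_mul_of_nonneg_right (mul_le_mul_of_nonneg_left hsinh_le hx.le)
            (by positivity)
      _ = Real.exp (-(h-w)*t) * w := hid
  have Hdiff : Differentiable ℝ H := by
    apply Differentiable.div_const
    exact (Real.differentiable_exp.comp (differentiable_id.const_mul (-h))).mul
      (Real.differentiable_sinh.comp (differentiable_id.const_mul w))
  have Hcont : Continuous H := Hdiff.continuous
  have hH1 : 0 < H 1 := by
    have hs : 0 < Real.sinh (w * 1) := Real.sinh_pos_iff.mpr (by linarith)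
    exact div_pos (mul_pos (Real.exp_pos _) hs) hw0
  set c : ℝ := h - w with hcdef
  have hc0 : 0 < c := by simp only [hcdef]; linarith
  set X : ℝ := 2*w*(H 1) with hXdef
  have hX0 : 0 < X := by positivity
  set T : ℝ := max 1 ((1 - Real.log X)/c) with hTdef
  have hT1 : (1:ℝ) ≤ T := le_max_left _ _
  have hT0 : (0:ℝ) ≤ T := by linarith
  have hTtail : ∀ t : ℝ, T ≤ t → H t < H 1 := by
    intro t htT
    have ht0 : 0 ≤ t := le_trans hT0 htT
    have hlt : Real.exp (-c*t) < X := by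
      rw [← Real.exp_log hX0, Real.exp_lt_exp]
      have h1 : (1 - Real.log X)/c ≤ T := le_max_right _ _
      have h2 : 1 - Real.log X ≤ T * c := (div_le_iff₀ hc0).mp h1
      nlinarith
    calc H t ≤ Real.exp (-c*t) / (2*w) := Htail t ht0
      _ < X / (2*w) := by
          apply div_lt_div_of_pos_right hlt (by positivity)
      _ = H 1 := by
          rw [hXdef]; field_simp
  obtain ⟨tn, htnmem, htnmax⟩ := isCompact_Icc.exists_isMaxOn
    (Set.nonempty_Icc.mpr hT0) Hcont.continuousOn
  have hmax : ∀ x ∈ Set.Icc (0:ℝ) T, H x ≤ H tn := fun x hx => htnmax hx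
  have hH1le : H 1 ≤ H tn := hmax 1 (Set.mem_Icc.mpr ⟨by norm_num, hT1⟩)
  have hH0 : H 0 = 0 := by simp [hHdef]
  have htn0 : 0 < tn := by
    rcases lt_or_eq_of_le htnmem.1 with h' | h'
    · exact h'
    · exfalso; rw [← h', hH0] at hH1le; linarith
  have htnT : tn < T := by
    rcases lt_or_eq_of_le htnmem.2 with h' | h'
    · exact h'
    · exfalso
      have := hTtail T le_rfl
      rw [← h'] at this
      linarith
  have hloc : IsLocalMax H tn := by
    have hmem : Set.Ioo (0:ℝ) T ∈ nhds tn := isOpen_Ioo.mem_nhds ⟨htn0, htnT⟩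
    exact Filter.eventually_of_mem hmem
      (fun x hx => hmax x (Set.mem_Icc.mpr ⟨hx.1.le, hx.2.le⟩))
  refine ⟨tn, htn0.le, hloc.deriv_eq_zero, ?_⟩
  intro t ht
  rw [abs_of_nonneg (Hnonneg t ht), abs_of_nonneg (Hnonneg tn htn0.le)]
  by_cases htT : t ≤ T
  · exact hmax t (Set.mem_Icc.mpr ⟨ht, htT⟩)
  · exact le_trans (hTtail t (le_of_not_ge htT)).le hH1le
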